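/- A nontrivial M𝒵-nilpotent multiplicative Lie algebra G has nontrivial 𝒵(G) = LZ(G) ∩ Z(G). -/

import Mathlib

/-- A multiplicative Lie algebra (Ellis): a group `G` with a second binary
operation `⋆` satisfying the five identities. `ˣy` denotes `x*y*x⁻¹`. -/
class MulLie (G : Type*) [Group G] where
  star : G → G → G
  star_self : ∀ x : G, star x x = 1
  star_mul_right : ∀ x y z : G, star x (y * z) = star x y * (y * star x z * y⁻¹)
  star_mul_left : ∀ x y z : G, star (x * y) z = (x * star y z * x⁻¹) * star x z
  jacobi : ∀ x y z : G,
    star (star x y) (y * z * y⁻¹) * star (star y z) (z * x * z⁻¹) *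
      star (star z x) (x * y * x⁻¹) = 1
  conj_star : ∀ x y z : G, z * star x y * z⁻¹ = star (z * x * z⁻¹) (z * y * z⁻¹)

open MulLie
open scoped commutatorElement

/-- The lower central series `M₀(G) = G`, `M_{n+1}(G) = (G ⋆ Mₙ(G))[G, Mₙ(G)]`. -/
def Mser (G : Type*) [Group G] [MulLie G] : ℕ → Subgroup G
  | 0 => ⊤
  | n + 1 => Subgroup.closure
      {z : G | ∃ g m : G, m ∈ Mser G n ∧ (z = star g m ∨ z = ⁅g, m⁆)}

/-- Antisymmetry: `y ⋆ x = (x ⋆ y)⁻¹`. -/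
lemma star_antisymm {G : Type*} [Group G] [MulLie G] (x y : G) :
    star y x = (star x y)⁻¹ := by
  have h := star_self (x * y)
  rw [star_mul_left, star_mul_right, star_mul_right, star_self, star_self] at h
  have h' : star y x * star x y = 1 := by
    have := congrArg (fun t => x⁻¹ * t * x) h
    group at this
    simpa [mul_assoc] using this
  exact eq_inv_of_mul_eq_one_left h'

/-- A nontrivial `M𝒵`-nilpotent multiplicative Lie algebra `G` has nontrivial
`𝒵(G) = LZ(G) ∩ Z(G)`. -/
theorem MZnilpotent_center_nontrivial
    (G : Type*) [Group G] [MulLie G] [Nontrivial G]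
    (hnil : ∃ n : ℕ, Mser G n = ⊥) :
    ∃ x : G, x ≠ 1 ∧ (∀ y : G, star x y = 1) ∧ x ∈ Subgroup.center G := by
  classical
  have hn : Mser G (Nat.find hnil) = ⊥ := Nat.find_spec hnil
  obtain ⟨a, b, hab⟩ := exists_pair_ne G
  have hn0 : Nat.find hnil ≠ 0 := by
    intro h
    rw [h] at hn
    have ha : a = 1 := by
      have : a ∈ Mser G 0 := by simp [Mser]
      rw [hn] at this; simpa using this
    have hb : b = 1 := by
      have : b ∈ Mser G 0 := by simp [Mser]
      rw [hn] at this; simpa using this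
    exact hab (ha.trans hb.symm)
  obtain ⟨k, hk⟩ := Nat.exists_eq_succ_of_ne_zero hn0
  have hkne : Mser G k ≠ ⊥ := Nat.find_min hnil (by omega)
  obtain ⟨⟨x, hxmem⟩, hx1⟩ := (Subgroup.ne_bot_iff_exists_ne_one).mp hkne
  have hx1 : x ≠ 1 := by simpa using hx1
  have hgen : ∀ g : G, star g x = 1 ∧ ⁅g, x⁆ = 1 := by
    intro g
    have hsub : ∀ z : G, (∃ g' m : G, m ∈ Mser G k ∧ (z = star g' m ∨ z = ⁅g', m⁆)) → z = 1 := by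
      intro z hz
      have : z ∈ Mser G (k + 1) := Subgroup.subset_closure hz
      rw [show k + 1 = Nat.find hnil from hk.symm, hn] at this
      simpa using this
    exact ⟨hsub _ ⟨g, x, hxmem, Or.inl rfl⟩, hsub _ ⟨g, x, hxmem, Or.inr rfl⟩⟩
  refine ⟨x, hx1, fun y => ?_, Subgroup.mem_center_iff.mpr fun g => ?_⟩
  · rw [star_antisymm y x, (hgen y).1, inv_one]
  · exact (commutatorElement_eq_one_iff_mul_comm.mp (hgen g).2)
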